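/- Let R be a Noetherian ℤ^d-graded ring finitely generated over its degree-0 piece by homogeneous elements, and let V be a finitely generated graded R-module. Then the quasidegree set qdeg(V), defined as the Zariski closure in ℂ^d of the true degree set tdeg(V) = {β ∈ ℤ^d : V_β ≠ 0}, is a finite union of affine subspaces of ℂ^d, each a translate of the complex span of the degrees of some subset of the homogeneous generators of R. -/

import Mathlib

open MvPolynomial DirectSum



private lemma aux_eval_nat_zero : ∀ (n : ℕ) (p : MvPolynomial (Fin n) ℂ),
    (∀ a : Fin n → ℕ, eval (fun i => (a i : ℂ)) p = 0) →
    ∀ x : Fin n → ℂ, eval x p = 0 := by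
  intro n
  induction n with
  | zero =>
    intro p hp x
    have hx : x = fun i => ((0:ℕ) : ℂ) := funext fun i => i.elim0
    rw [hx]; exact hp (fun _ => 0)
  | succ n ih =>
    intro p hp x
    have hx : x = Fin.cons (x 0) (fun i => x i.succ) := (Fin.cons_self_tail x).symm
    rw [hx, eval_eq_eval_mv_eval']
    have hcoeff : ∀ (k : ℕ) (y : Fin n → ℂ),
        eval y ((finSuccEquiv ℂ n p).coeff k) = 0 := by
      intro k y
      refine ih _ ?_ y
      intro a
      have h0 : Polynomial.map (eval fun i => (a i : ℂ)) (finSuccEquiv ℂ n p) = 0 := by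
        refine Polynomial.eq_zero_of_infinite_isRoot _ ?_
        have hsub : Set.range (fun m : ℕ => (m : ℂ)) ⊆
            {z : ℂ | Polynomial.IsRoot (Polynomial.map (eval fun i => (a i : ℂ)) (finSuccEquiv ℂ n p)) z} := by
          rintro - ⟨m, rfl⟩
          have h1 := hp (Fin.cons m a)
          rw [show (fun i => ((Fin.cons m a : Fin (n+1) → ℕ) i : ℂ)) =
              Fin.cons (m : ℂ) (fun i => (a i : ℂ)) from ?_] at h1
          · rw [eval_eq_eval_mv_eval'] at h1
            exact h1
          · funext i
            refine Fin.cases ?_ ?_ i <;> simp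
        exact Set.Infinite.mono hsub (Set.infinite_range_of_injective (fun a b h => Nat.cast_injective h))
      have h2 := congrArg (fun q => Polynomial.coeff q k) h0
      simpa [Polynomial.coeff_map] using h2
    have hmap : Polynomial.map (eval fun i => x i.succ) (finSuccEquiv ℂ n p) = 0 := by
      ext k
      simp [Polynomial.coeff_map, hcoeff]
    rw [hmap]; simp

/-- Zariski-closure-like operator used in the statement. -/
private def zcl (d : ℕ) (S : Set (Fin d → ℂ)) : Set (Fin d → ℂ) :=
  {x | ∀ p : MvPolynomial (Fin d) ℂ, (∀ y ∈ S, eval y p = 0) → eval x p = 0}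

private lemma zcl_empty (d : ℕ) : zcl d ∅ = ∅ := by
  ext x
  simp only [zcl, Set.mem_setOf_eq, Set.mem_empty_iff_false, iff_false]
  intro h
  have := h 1 (by simp)
  simpa using this

private lemma zcl_union (d : ℕ) (A B : Set (Fin d → ℂ)) :
    zcl d (A ∪ B) = zcl d A ∪ zcl d B := by
  ext x
  constructor
  · intro hx
    by_contra hc
    rw [Set.mem_union, not_or] at hc
    obtain ⟨hA, hB⟩ := hc
    simp only [zcl, Set.mem_setOf_eq, not_forall] at hA hB
    obtain ⟨p, hp, hpx⟩ := hA
    obtain ⟨q, hq, hqx⟩ := hB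
    have := hx (p * q) ?_
    · rw [map_mul] at this
      rcases mul_eq_zero.mp this with h | h
      exacts [hpx h, hqx h]
    · intro y hy
      rw [map_mul]
      rcases hy with hy | hy
      · rw [hp y hy, zero_mul]
      · rw [hq y hy, mul_zero]
  · rintro (hx | hx) p hp
    · exact hx p (fun y hy => hp y (Or.inl hy))
    · exact hx p (fun y hy => hp y (Or.inr hy))



private lemma aux_eval_bind (a b : ℕ) (f : Fin a → MvPolynomial (Fin b) ℂ) (z : Fin b → ℂ)
    (p : MvPolynomial (Fin a) ℂ) :
    eval z (bind₁ f p) = eval (fun i => eval z (f i)) p := by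
  have h := eval₂Hom_bind₁ (RingHom.id ℂ) z f p
  simpa using h

private lemma zcl_piece (d r : ℕ) (dg : Fin r → Fin d → ℤ) (β : Fin d → ℤ) (s : Finset (Fin r)) :
    zcl d ((fun (δ : Fin d → ℤ) => (fun i => (δ i : ℂ))) ''
        {δ : Fin d → ℤ | ∃ c : Fin r → ℕ, δ = β + ∑ j ∈ s, (c j : ℤ) • dg j})
    = {x : Fin d → ℂ | ∃ c : Fin r → ℂ,
        x = (fun i => (β i : ℂ)) + ∑ j ∈ s, c j • (fun i => (dg j i : ℂ))} := by
  set βc : Fin d → ℂ := fun i => (β i : ℂ) with hβc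
  set vs : Fin r → (Fin d → ℂ) := fun j => (fun i => (dg j i : ℂ)) with hvs
  have hpt : ∀ (c : Fin r → ℂ) (i : Fin d),
      (βc + ∑ j ∈ s, c j • vs j) i = βc i + ∑ j ∈ s, c j * dg j i := by
    intro c i
    simp [Finset.sum_apply, hvs]
  have hemb : ∀ c : Fin r → ℕ,
      (fun i => (((β + ∑ j ∈ s, (c j : ℤ) • dg j) i : ℤ) : ℂ))
        = βc + ∑ j ∈ s, ((c j : ℂ)) • vs j := by
    intro c
    funext i
    rw [hpt]
    simp only [Pi.add_apply, Finset.sum_apply, Pi.smul_apply, zsmul_eq_mul, Pi.mul_apply,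
      Pi.intCast_apply]
    push_cast
    ring
  ext x
  constructor
  · -- closure ⊆ affine subspace
    intro hx
    set U : Submodule ℂ (Fin d → ℂ) :=
      Submodule.span ℂ (Set.range (fun j : {j // j ∈ s} => vs j)) with hU
    have hvsU : ∀ j ∈ s, vs j ∈ U := by
      intro j hj
      exact Submodule.subset_span ⟨⟨j, hj⟩, rfl⟩
    have hwU : x - βc ∈ U := by
      by_contra hw
      obtain ⟨φ, hφx, hφU⟩ := Submodule.exists_dual_map_eq_bot_of_notMem hw inferInstance
      have hφ0 : ∀ u ∈ U, φ u = 0 := by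
        intro u hu
        have h2 : φ u ∈ Submodule.map φ U := Submodule.mem_map_of_mem hu
        rw [hφU] at h2
        simpa using h2
      set p : MvPolynomial (Fin d) ℂ :=
        (∑ i, C (φ (fun j => if i = j then 1 else 0)) * X i) - C (φ βc) with hp
      have keval : ∀ y : Fin d → ℂ, eval y p = φ y - φ βc := by
        intro y
        conv_rhs => rw [LinearMap.pi_apply_eq_sum_univ φ y]
        simp only [hp, map_sub, map_sum, map_mul, eval_C, eval_X, smul_eq_mul]
        rw [Finset.sum_congr rfl (fun i _ => mul_comm (φ fun j => if i = j then 1 else 0) (y i))]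
      have hvan : ∀ y ∈ (fun (δ : Fin d → ℤ) => (fun i => (δ i : ℂ))) ''
          {δ : Fin d → ℤ | ∃ c : Fin r → ℕ, δ = β + ∑ j ∈ s, (c j : ℤ) • dg j}, eval y p = 0 := by
        rintro - ⟨δ, ⟨c, rfl⟩, rfl⟩
        show eval ((fun i => (((β + ∑ j ∈ s, (c j : ℤ) • dg j) i : ℤ) : ℂ))) p = 0
        rw [keval, hemb c, map_add, map_sum]
        have hz : ∀ j ∈ s, φ (((c j : ℂ)) • vs j) = 0 := by
          intro j hj
          rw [map_smul]
          rw [hφ0 (vs j) (hvsU j hj)]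
          simp
        rw [Finset.sum_congr rfl hz]
        simp
      have h0 := hx p hvan
      rw [keval] at h0
      rw [map_sub] at hφx
      rw [sub_eq_zero] at h0
      exact hφx (by rw [sub_eq_zero]; exact h0)
    rw [Submodule.mem_span_range_iff_exists_fun ℂ] at hwU
    obtain ⟨c, hc⟩ := hwU
    classical
    refine ⟨fun j => if h : j ∈ s then c ⟨j, h⟩ else 0, ?_⟩
    have hs : ∑ j ∈ s, (fun j => if h : j ∈ s then c ⟨j, h⟩ else 0) j • vs j
        = ∑ i : {j // j ∈ s}, c i • vs i := by
      rw [← Finset.sum_attach s (fun j => (if h : j ∈ s then c ⟨j, h⟩ else 0) • vs j)]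
      refine Finset.sum_congr rfl ?_
      rintro ⟨j, hj⟩ -
      simp [hj]
    rw [hs, hc]
    abel
  · -- affine subspace ⊆ closure
    rintro ⟨c, rfl⟩ p hp
    classical
    set F : Fin d → MvPolynomial (Fin r) ℂ :=
      fun i => C (βc i) + ∑ j ∈ s, C ((dg j i : ℂ)) * X j with hF
    set q : MvPolynomial (Fin r) ℂ := bind₁ F p with hq
    have hFeval : ∀ (z : Fin r → ℂ) i, eval z (F i) = βc i + ∑ j ∈ s, z j * dg j i := by
      intro z i
      simp [hF, mul_comm]
    have hqnat : ∀ a : Fin r → ℕ, eval (fun j => (a j : ℂ)) q = 0 := by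
      intro a
      rw [hq, aux_eval_bind]
      have h1 := hp _ ⟨β + ∑ j ∈ s, (a j : ℤ) • dg j, ⟨a, rfl⟩, rfl⟩
      rw [show (fun i => eval (fun j => (a j : ℂ)) (F i))
          = (fun i => (((β + ∑ j ∈ s, (a j : ℤ) • dg j) i : ℤ) : ℂ)) from ?_]
      · exact h1
      · funext i
        have h2 := congrFun (hemb a) i
        rw [hpt] at h2
        rw [hFeval]
        exact h2.symm
    have hq0 := aux_eval_nat_zero r q hqnat c
    rw [hq, aux_eval_bind] at hq0
    rw [show (fun i => eval c (F i)) = βc + ∑ j ∈ s, c j • vs j from ?_] at hq0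
    · exact hq0
    · funext i
      rw [hFeval, hpt]



section graded

variable {d r : ℕ} {R V : Type} [CommRing R]
  (𝒜 : (Fin d → ℤ) → AddSubgroup R) [GradedRing 𝒜]
  [AddCommGroup V] [Module R V]
  (𝒱 : (Fin d → ℤ) → AddSubgroup V) [DirectSum.Decomposition 𝒱]

private lemma aux_dec_add (u v : V) (δ : Fin d → ℤ) :
    (decompose 𝒱 (u + v) δ : V) = (decompose 𝒱 u δ : V) + (decompose 𝒱 v δ : V) := by
  rw [DirectSum.decompose_add]
  simp

private lemma aux_proj_smul
    (hsmul : ∀ (α β : Fin d → ℤ) (x : R) (v : V),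
      x ∈ 𝒜 α → v ∈ 𝒱 β → x • v ∈ 𝒱 (α + β))
    {v : V} {δ₀ : Fin d → ℤ} (hv : v ∈ 𝒱 δ₀) (z : R) (δ : Fin d → ℤ) :
    (decompose 𝒱 (z • v) δ : V) = (decompose 𝒜 z (δ - δ₀) : R) • v := by
  classical
  conv_lhs => rw [← DirectSum.sum_support_decompose 𝒜 z]
  rw [Finset.sum_smul, DirectSum.decompose_sum]
  rw [DFinsupp.finset_sum_apply]
  push_cast [AddSubmonoidClass.coe_finset_sum]
  have hterm : ∀ α ∈ (decompose 𝒜 z).support, α ≠ δ - δ₀ →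
      (decompose 𝒱 ((decompose 𝒜 z α : R) • v) δ : V) = 0 := by
    intro α _ hα
    refine DirectSum.decompose_of_mem_ne 𝒱 (hsmul α δ₀ ((decompose 𝒜 z α : R)) v (SetLike.coe_mem _) hv) ?_
    intro h
    exact hα (by rw [← h]; abel)
  by_cases hmem : (δ - δ₀) ∈ (decompose 𝒜 z).support
  · rw [Finset.sum_eq_single_of_mem (δ - δ₀) hmem
      (fun α hα hne => hterm α hα hne)]
    have : (decompose 𝒜 z (δ - δ₀) : R) • v ∈ 𝒱 δ := by
      have h := hsmul (δ - δ₀) δ₀ ((decompose 𝒜 z (δ - δ₀) : R)) v (SetLike.coe_mem _) hv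
      rwa [sub_add_cancel] at h
    exact DirectSum.decompose_of_mem_same 𝒱 this
  · rw [Finset.sum_eq_zero (fun α hα => hterm α hα (fun h => hmem (h ▸ hα)))]
    have : (decompose 𝒜 z (δ - δ₀)) = 0 := DFinsupp.notMem_support_iff.mp hmem
    rw [this]
    simp

private lemma aux_proj_mul {a : R} {α : Fin d → ℤ} (ha : a ∈ 𝒜 α) (z : R) (δ : Fin d → ℤ) :
    (decompose 𝒜 (z * a) δ : R) = (decompose 𝒜 z (δ - α) : R) * a := by
  have h := aux_proj_smul 𝒜 𝒜
    (fun α' β' x y hx hy => by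
      simpa [smul_eq_mul] using SetLike.mul_mem_graded hx hy) ha z δ
  simpa [smul_eq_mul] using h

end graded

section goodsets

variable {d r : ℕ} (dg : Fin r → Fin d → ℤ)

/-- A "good" subset of `ℤ^d`: finite union of translated `ℕ`-cones on subsets of `dg`. -/
private def GoodSet (T : Set (Fin d → ℤ)) : Prop :=
  ∃ L : List ((Fin d → ℤ) × Finset (Fin r)),
    T = ⋃ q ∈ L, {δ : Fin d → ℤ | ∃ c : Fin r → ℕ, δ = q.1 + ∑ j ∈ q.2, (c j : ℤ) • dg j}

private lemma GoodSet_empty : GoodSet dg (∅ : Set (Fin d → ℤ)) :=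
  ⟨[], by simp⟩

private lemma GoodSet_union {T₁ T₂ : Set (Fin d → ℤ)} (h₁ : GoodSet dg T₁)
    (h₂ : GoodSet dg T₂) : GoodSet dg (T₁ ∪ T₂) := by
  obtain ⟨L₁, rfl⟩ := h₁
  obtain ⟨L₂, rfl⟩ := h₂
  refine ⟨L₁ ++ L₂, ?_⟩
  ext δ
  simp only [Set.mem_union, Set.mem_iUnion, List.mem_append, exists_prop]
  constructor
  · rintro (⟨q, hq, hc⟩ | ⟨q, hq, hc⟩)
    exacts [⟨q, Or.inl hq, hc⟩, ⟨q, Or.inr hq, hc⟩]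
  · rintro ⟨q, hq | hq, hc⟩
    exacts [Or.inl ⟨q, hq, hc⟩, Or.inr ⟨q, hq, hc⟩]

private lemma GoodSet_translate {T : Set (Fin d → ℤ)} (β : Fin d → ℤ)
    (h : GoodSet dg T) : GoodSet dg ((fun δ => β + δ) '' T) := by
  obtain ⟨L, rfl⟩ := h
  refine ⟨L.map (fun q => (β + q.1, q.2)), ?_⟩
  ext δ
  simp only [Set.mem_image, Set.mem_iUnion, List.mem_map, exists_prop]
  constructor
  · rintro ⟨δ', ⟨q, hq, c, rfl⟩, rfl⟩
    exact ⟨(β + q.1, q.2), ⟨q, hq, rfl⟩, c, by rw [add_assoc]⟩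
  · rintro ⟨q', ⟨q, hq, rfl⟩, c, rfl⟩
    exact ⟨q.1 + ∑ j ∈ q.2, (c j : ℤ) • dg j, ⟨q, hq, c, rfl⟩, by rw [add_assoc]⟩

end goodsets

section structure_lemma

variable {d r : ℕ} {R : Type} [CommRing R]
  (𝒜 : (Fin d → ℤ) → AddSubgroup R) [GradedRing 𝒜]
  (g : Fin r → R) (dg : Fin r → Fin d → ℤ)

private lemma aux_mono_mem (hg : ∀ j, g j ∈ 𝒜 (dg j)) (a : Fin r → ℕ) (t : Finset (Fin r)) :
    (∏ j ∈ t, g j ^ a j) ∈ 𝒜 (∑ j ∈ t, (a j : ℤ) • dg j) := by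
  classical
  induction t using Finset.induction_on with
  | empty => simpa using SetLike.one_mem_graded 𝒜
  | @insert j t hjt ih =>
    rw [Finset.prod_insert hjt, Finset.sum_insert hjt]
    refine SetLike.mul_mem_graded ?_ ih
    have h := SetLike.pow_mem_graded (a j) (hg j)
    rwa [← natCast_zsmul] at h

private def monSet (δ : Fin d → ℤ) : Set R :=
  {y : R | ∃ (c : R) (a : Fin r → ℕ), c ∈ 𝒜 0 ∧
    (∑ j, (a j : ℤ) • dg j) = δ ∧ y = c * ∏ j, g j ^ a j}

private lemma aux_structure (hg : ∀ j, g j ∈ 𝒜 (dg j))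
    (hgen : Subring.closure ((𝒜 0 : Set R) ∪ Set.range g) = ⊤)
    {δ : Fin d → ℤ} {x : R} (hx : x ∈ 𝒜 δ) :
    x ∈ AddSubgroup.closure (monSet 𝒜 g dg δ) := by
  classical
  set S : Set R := {y : R | ∃ (c : R) (a : Fin r → ℕ), c ∈ 𝒜 0 ∧ y = c * ∏ j, g j ^ a j}
    with hS
  have hSmul : ∀ x' ∈ S, ∀ y' ∈ S, x' * y' ∈ S := by
    rintro - ⟨c1, a1, hc1, rfl⟩ - ⟨c2, a2, hc2, rfl⟩
    refine ⟨c1 * c2, a1 + a2, by simpa using SetLike.mul_mem_graded hc1 hc2, ?_⟩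
    simp_rw [Pi.add_apply, pow_add, Finset.prod_mul_distrib]
    ring
  have hclosed : ∀ x' ∈ AddSubgroup.closure S, ∀ y' ∈ AddSubgroup.closure S,
      x' * y' ∈ AddSubgroup.closure S := by
    intro x' hx'
    refine AddSubgroup.closure_induction
      (p := fun z _ => ∀ y' ∈ AddSubgroup.closure S, z * y' ∈ AddSubgroup.closure S)
      ?_ ?_ ?_ ?_ hx'
    · intro z hz y' hy'
      refine AddSubgroup.closure_induction
        (p := fun w _ => z * w ∈ AddSubgroup.closure S) ?_ ?_ ?_ ?_ hy'
      · intro w hw; exact AddSubgroup.subset_closure (hSmul z hz w hw)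
      · show z * 0 ∈ AddSubgroup.closure S
        rw [mul_zero]; exact zero_mem _
      · intro w₁ w₂ _ _ ih1 ih2
        show z * (w₁ + w₂) ∈ AddSubgroup.closure S
        rw [mul_add]; exact add_mem ih1 ih2
      · intro w _ ih
        show z * (-w) ∈ AddSubgroup.closure S
        rw [mul_neg]; exact neg_mem ih
    · intro y' _
      show 0 * y' ∈ AddSubgroup.closure S
      rw [zero_mul]; exact zero_mem _
    · intro z₁ z₂ _ _ ih1 ih2 y' hy'
      show (z₁ + z₂) * y' ∈ AddSubgroup.closure S
      rw [add_mul]; exact add_mem (ih1 y' hy') (ih2 y' hy')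
    · intro z _ ih y' hy'
      show (-z) * y' ∈ AddSubgroup.closure S
      rw [neg_mul]; exact neg_mem (ih y' hy')
  have h1S : (1 : R) ∈ S := ⟨1, 0, SetLike.one_mem_graded 𝒜, by simp⟩
  let Sr : Subring R :=
    { carrier := AddSubgroup.closure S
      mul_mem' := fun hx' hy' => hclosed _ hx' _ hy'
      one_mem' := AddSubgroup.subset_closure h1S
      add_mem' := fun hx' hy' => add_mem hx' hy'
      zero_mem' := zero_mem _
      neg_mem' := fun hx' => neg_mem hx' }
  have htop : ∀ z : R, z ∈ AddSubgroup.closure S := by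
    have hle : Subring.closure ((𝒜 0 : Set R) ∪ Set.range g) ≤ Sr := by
      rw [Subring.closure_le]
      rintro z (hz | ⟨j, rfl⟩)
      · exact AddSubgroup.subset_closure ⟨z, 0, hz, by simp⟩
      · refine AddSubgroup.subset_closure ⟨1, Pi.single j 1, SetLike.one_mem_graded 𝒜, ?_⟩
        rw [one_mul]
        rw [Finset.prod_eq_single j (fun b _ hb => by
            rw [Pi.single_eq_of_ne hb, pow_zero]) (fun h => absurd (Finset.mem_univ j) h)]
        rw [Pi.single_eq_same, pow_one]
    intro z
    have hz : z ∈ Subring.closure ((𝒜 0 : Set R) ∪ Set.range g) := by rw [hgen]; trivial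
    exact hle hz
  have hproj : ∀ z ∈ AddSubgroup.closure S, ∀ δ' : Fin d → ℤ,
      (decompose 𝒜 z δ' : R) ∈ AddSubgroup.closure (monSet 𝒜 g dg δ') := by
    intro z hz
    refine AddSubgroup.closure_induction
      (p := fun z _ => ∀ δ' : Fin d → ℤ,
        (decompose 𝒜 z δ' : R) ∈ AddSubgroup.closure (monSet 𝒜 g dg δ')) ?_ ?_ ?_ ?_ hz
    · rintro - ⟨c, a, hc, rfl⟩ δ'
      have hdeg : c * ∏ j, g j ^ a j ∈ 𝒜 (∑ j, (a j : ℤ) • dg j) := by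
        have h := SetLike.mul_mem_graded hc (aux_mono_mem 𝒜 g dg hg a Finset.univ)
        simpa using h
      by_cases hδ : (∑ j, (a j : ℤ) • dg j) = δ'
      · subst hδ
        rw [DirectSum.decompose_of_mem_same 𝒜 hdeg]
        exact AddSubgroup.subset_closure ⟨c, a, hc, rfl, rfl⟩
      · rw [DirectSum.decompose_of_mem_ne 𝒜 hdeg hδ]
        exact zero_mem _
    · intro δ'
      rw [DirectSum.decompose_zero]
      simpa using zero_mem _
    · intro z₁ z₂ _ _ ih1 ih2 δ'
      rw [aux_dec_add 𝒜 z₁ z₂ δ']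
      exact add_mem (ih1 δ') (ih2 δ')
    · intro z' _ ih δ'
      have hneg : (decompose 𝒜 (-z') δ' : R) = -(decompose 𝒜 z' δ' : R) := by
        rw [DirectSum.decompose_neg]
        rw [DFinsupp.neg_apply]
        simp
      rw [hneg]
      exact neg_mem (ih δ')
  have h := hproj x (htop x) δ
  rwa [DirectSum.decompose_of_mem_same 𝒜 hx] at h

end structure_lemma

section keyI

private lemma aux_keyI {d r : ℕ} {R : Type} [CommRing R] [IsNoetherianRing R]
    (𝒜 : (Fin d → ℤ) → AddSubgroup R) [GradedRing 𝒜]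
    (g : Fin r → R) (dg : Fin r → Fin d → ℤ)
    (hg : ∀ j, g j ∈ 𝒜 (dg j))
    (hgen : Subring.closure ((𝒜 0 : Set R) ∪ Set.range g) = ⊤) :
    ∀ I : Ideal R, (∀ x ∈ I, ∀ δ, (decompose 𝒜 x δ : R) ∈ I) →
      GoodSet dg {δ : Fin d → ℤ | ∃ x ∈ 𝒜 δ, x ∉ I} := by
  classical
  intro I
  refine (wellFounded_gt (α := Ideal R)).induction
    (C := fun I => (∀ x ∈ I, ∀ δ, (decompose 𝒜 x δ : R) ∈ I) →
      GoodSet dg {δ : Fin d → ℤ | ∃ x ∈ 𝒜 δ, x ∉ I}) I ?_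
  clear I
  intro I IH hGr
  by_cases hI1 : (1 : R) ∈ I
  · have hIT : I = ⊤ := (Ideal.eq_top_iff_one I).mpr hI1
    refine ⟨[], ?_⟩
    ext δ
    simp [hIT]
  by_cases hP : ∀ x y : R, (∃ α, x ∈ 𝒜 α) → (∃ γ, y ∈ 𝒜 γ) → x ∉ I → y ∉ I → x * y ∉ I
  · -- homogeneously prime case
    set s : Finset (Fin r) := Finset.univ.filter (fun j => g j ∉ I) with hs
    refine ⟨[((0 : Fin d → ℤ), s)], ?_⟩
    ext δ
    simp only [Set.mem_setOf_eq, Set.mem_iUnion, List.mem_singleton, exists_prop,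
      exists_eq_left]
    constructor
    · rintro ⟨x, hxδ, hxI⟩
      by_contra hno
      apply hxI
      have hle : AddSubgroup.closure (monSet 𝒜 g dg δ) ≤ I.toAddSubgroup := by
        rw [AddSubgroup.closure_le]
        rintro - ⟨c, a, hc, hsum, rfl⟩
        by_cases hmem : ∀ j, a j ≠ 0 → g j ∉ I
        · exfalso
          apply hno
          refine ⟨a, ?_⟩
          rw [zero_add, ← hsum]
          refine (Finset.sum_subset (Finset.subset_univ s) ?_).symm
          intro j _ hjs
          have hgj : g j ∈ I := by
            by_contra hgj
            exact hjs (Finset.mem_filter.mpr ⟨Finset.mem_univ j, hgj⟩)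
          have haj : a j = 0 := by
            by_contra haj
            exact (hmem j haj) hgj
          rw [haj]
          simp
        · push_neg at hmem
          obtain ⟨j, haj, hgj⟩ := hmem
          have hdvd : g j ∣ ∏ j', g j' ^ a j' :=
            dvd_trans (dvd_pow_self (g j) haj) (Finset.dvd_prod_of_mem _ (Finset.mem_univ j))
          obtain ⟨k, hk⟩ := hdvd
          rw [hk]
          exact I.mul_mem_left c (I.mul_mem_right k hgj)
      exact hle (aux_structure 𝒜 g dg hg hgen hxδ)
    · rintro ⟨c, rfl⟩
      refine ⟨∏ j ∈ s, g j ^ c j, ?_, ?_⟩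
      · have h := aux_mono_mem 𝒜 g dg hg c s
        rw [zero_add]
        exact h
      · have key : ∀ t : Finset (Fin r), (∀ j ∈ t, g j ∉ I) → (∏ j ∈ t, g j ^ c j) ∉ I := by
          intro t
          induction t using Finset.induction_on with
          | empty => intro _; simpa using hI1
          | @insert j t hjt ih =>
            intro hall
            rw [Finset.prod_insert hjt]
            have hgj : g j ∉ I := hall j (Finset.mem_insert_self j t)
            have hpow : ∀ n : ℕ, g j ^ n ∉ I := by
              intro n
              induction n with
              | zero => simpa using hI1
              | succ n ihn =>
                rw [pow_succ]
                exact hP _ _ ⟨_, SetLike.pow_mem_graded n (hg j)⟩ ⟨_, hg j⟩ ihn hgj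
            exact hP _ _ ⟨_, SetLike.pow_mem_graded (c j) (hg j)⟩
              ⟨_, aux_mono_mem 𝒜 g dg hg c t⟩ (hpow (c j))
              (ih (fun j' hj' => hall j' (Finset.mem_insert_of_mem hj')))
        refine key s ?_
        intro j hj
        rw [hs] at hj
        exact (Finset.mem_filter.mp hj).2
  · -- not homogeneously prime
    push_neg at hP
    obtain ⟨x0, y0, ⟨α, hx0α⟩, ⟨γ, hy0γ⟩, hx0, hy0, hxy⟩ := hP
    set I₁ : Ideal R := I ⊔ Ideal.span {x0} with hI₁
    set I₂ : Ideal R := Submodule.comap (LinearMap.mulLeft R x0) I with hI₂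
    have hmemI₂ : ∀ z : R, z ∈ I₂ ↔ x0 * z ∈ I := by
      intro z
      rw [hI₂]
      simp [Submodule.mem_comap, LinearMap.mulLeft_apply]
    have hx0I₁ : x0 ∈ I₁ := Submodule.mem_sup_right (Ideal.mem_span_singleton_self x0)
    have hII₁ : I < I₁ := lt_of_le_of_ne le_sup_left (fun h => hx0 (h ▸ hx0I₁))
    have hy0I₂ : y0 ∈ I₂ := (hmemI₂ y0).mpr hxy
    have hII₂ : I < I₂ := by
      refine lt_of_le_of_ne (fun z hz => ?_) (fun h => hy0 (h ▸ hy0I₂))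
      exact (hmemI₂ z).mpr (I.mul_mem_left x0 hz)
    have hGr₁ : ∀ x ∈ I₁, ∀ δ, (decompose 𝒜 x δ : R) ∈ I₁ := by
      intro x hx δ
      rw [hI₁] at hx
      rw [Submodule.mem_sup] at hx
      obtain ⟨u, hu, w, hw, rfl⟩ := hx
      rw [Ideal.mem_span_singleton'] at hw
      obtain ⟨t, rfl⟩ := hw
      rw [aux_dec_add 𝒜 u (t * x0) δ]
      refine add_mem (Submodule.mem_sup_left (hGr u hu δ)) (Submodule.mem_sup_right ?_)
      rw [aux_proj_mul 𝒜 hx0α t δ]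
      exact Ideal.mem_span_singleton'.mpr ⟨_, rfl⟩
    have hGr₂ : ∀ x ∈ I₂, ∀ δ, (decompose 𝒜 x δ : R) ∈ I₂ := by
      intro z hz δ
      rw [hmemI₂] at hz ⊢
      have h1 : x0 * (decompose 𝒜 z δ : R) = (decompose 𝒜 (z * x0) (δ + α) : R) := by
        rw [aux_proj_mul 𝒜 hx0α z (δ + α), add_sub_cancel_right, mul_comm]
      rw [h1]
      exact hGr (z * x0) (by rwa [mul_comm]) (δ + α)
    have hT : {δ : Fin d → ℤ | ∃ x ∈ 𝒜 δ, x ∉ I}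
        = {δ : Fin d → ℤ | ∃ x ∈ 𝒜 δ, x ∉ I₁}
          ∪ (fun δ => α + δ) '' {δ : Fin d → ℤ | ∃ x ∈ 𝒜 δ, x ∉ I₂} := by
      ext δ
      constructor
      · rintro ⟨x, hxδ, hxI⟩
        by_cases h1 : ∃ x' ∈ 𝒜 δ, x' ∉ I₁
        · exact Or.inl h1
        · push_neg at h1
          refine Or.inr ⟨δ - α, ?_, by ring⟩
          by_contra hno
          rw [Set.mem_setOf_eq] at hno
          push_neg at hno
          apply hxI
          have hx1 : x ∈ I₁ := h1 x hxδ
          rw [hI₁, Submodule.mem_sup] at hx1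
          obtain ⟨u, hu, w, hw, hsum⟩ := hx1
          rw [Ideal.mem_span_singleton'] at hw
          obtain ⟨t, rfl⟩ := hw
          have hdx : x = (decompose 𝒜 (u + t * x0) δ : R) := by
            rw [hsum, DirectSum.decompose_of_mem_same 𝒜 hxδ]
          rw [hdx, aux_dec_add 𝒜 u (t * x0) δ]
          refine add_mem (hGr u hu δ) ?_
          rw [aux_proj_mul 𝒜 hx0α t δ]
          have ht : (decompose 𝒜 t (δ - α) : R) ∈ I₂ :=
            hno _ (SetLike.coe_mem _)
          rw [hmemI₂] at ht
          rwa [mul_comm] at ht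
      · rintro (⟨x, hxδ, hxI₁⟩ | ⟨δ', ⟨y, hyδ', hyI₂⟩, rfl⟩)
        · exact ⟨x, hxδ, fun h => hxI₁ (Submodule.mem_sup_left h)⟩
        · refine ⟨x0 * y, SetLike.mul_mem_graded hx0α hyδ', ?_⟩
          intro h
          exact hyI₂ ((hmemI₂ y).mpr h)
    rw [hT]
    exact GoodSet_union dg (IH I₁ hII₁ hGr₁) (GoodSet_translate dg α (IH I₂ hII₂ hGr₂))

end keyI


section keyV

private lemma aux_keyV {d r : ℕ} {R V : Type} [CommRing R] [IsNoetherianRing R]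
    (𝒜 : (Fin d → ℤ) → AddSubgroup R) [GradedRing 𝒜]
    (g : Fin r → R) (dg : Fin r → Fin d → ℤ)
    (hg : ∀ j, g j ∈ 𝒜 (dg j))
    (hgen : Subring.closure ((𝒜 0 : Set R) ∪ Set.range g) = ⊤)
    [AddCommGroup V] [Module R V] [Module.Finite R V]
    (𝒱 : (Fin d → ℤ) → AddSubgroup V) [DirectSum.Decomposition 𝒱]
    (hsmul : ∀ (α β : Fin d → ℤ) (x : R) (v : V),
      x ∈ 𝒜 α → v ∈ 𝒱 β → x • v ∈ 𝒱 (α + β)) :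
    ∀ W : Submodule R V, (∀ v ∈ W, ∀ δ, (decompose 𝒱 v δ : V) ∈ W) →
      GoodSet dg {δ : Fin d → ℤ | ∃ v ∈ 𝒱 δ, v ∉ W} := by
  classical
  have hN : IsNoetherian R V := isNoetherian_of_isNoetherianRing_of_finite R V
  intro W
  refine (wellFounded_gt (α := Submodule R V)).induction
    (C := fun W => (∀ v ∈ W, ∀ δ, (decompose 𝒱 v δ : V) ∈ W) →
      GoodSet dg {δ : Fin d → ℤ | ∃ v ∈ 𝒱 δ, v ∉ W}) W ?_
  clear W
  intro W IH hGr
  by_cases hT : {δ : Fin d → ℤ | ∃ v ∈ 𝒱 δ, v ∉ W} = ∅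
  · rw [hT]
    exact GoodSet_empty dg
  · obtain ⟨δ₀, v, hv, hvW⟩ := Set.nonempty_iff_ne_empty.mpr hT
    set W' : Submodule R V := W ⊔ Submodule.span R {v} with hW'
    have hvW' : v ∈ W' := Submodule.mem_sup_right (Submodule.mem_span_singleton_self v)
    have hWW' : W < W' := lt_of_le_of_ne le_sup_left (fun h => hvW (h ▸ hvW'))
    set J : Ideal R := Submodule.comap (LinearMap.toSpanSingleton R V v) W with hJ
    have hmemJ : ∀ z : R, z ∈ J ↔ z • v ∈ W := by
      intro z
      rw [hJ]
      simp [Submodule.mem_comap, LinearMap.toSpanSingleton_apply]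
    have hGrW' : ∀ u ∈ W', ∀ δ, (decompose 𝒱 u δ : V) ∈ W' := by
      intro u hu δ
      rw [hW', Submodule.mem_sup] at hu
      obtain ⟨w, hw, w2, hw2, rfl⟩ := hu
      rw [Submodule.mem_span_singleton] at hw2
      obtain ⟨z, rfl⟩ := hw2
      rw [aux_dec_add 𝒱 w (z • v) δ]
      refine add_mem (Submodule.mem_sup_left (hGr w hw δ)) (Submodule.mem_sup_right ?_)
      rw [aux_proj_smul 𝒜 𝒱 hsmul hv z δ]
      exact Submodule.smul_mem _ _ (Submodule.mem_span_singleton_self v)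
    have hGrJ : ∀ z ∈ J, ∀ δ, (decompose 𝒜 z δ : R) ∈ J := by
      intro z hz δ
      rw [hmemJ] at hz ⊢
      have h1 : (decompose 𝒜 z δ : R) • v = (decompose 𝒱 (z • v) (δ + δ₀) : V) := by
        rw [aux_proj_smul 𝒜 𝒱 hsmul hv z (δ + δ₀), add_sub_cancel_right]
      rw [h1]
      exact hGr (z • v) hz (δ + δ₀)
    have hT2 : {δ : Fin d → ℤ | ∃ u ∈ 𝒱 δ, u ∉ W}
        = {δ : Fin d → ℤ | ∃ u ∈ 𝒱 δ, u ∉ W'}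
          ∪ (fun δ => δ₀ + δ) '' {δ : Fin d → ℤ | ∃ x ∈ 𝒜 δ, x ∉ J} := by
      ext δ
      constructor
      · rintro ⟨u, huδ, huW⟩
        by_cases h1 : ∃ u' ∈ 𝒱 δ, u' ∉ W'
        · exact Or.inl h1
        · push_neg at h1
          refine Or.inr ⟨δ - δ₀, ?_, by ring⟩
          by_contra hno
          rw [Set.mem_setOf_eq] at hno
          push_neg at hno
          apply huW
          have hu1 : u ∈ W' := h1 u huδ
          rw [hW', Submodule.mem_sup] at hu1
          obtain ⟨w, hw, w2, hw2, hsum⟩ := hu1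
          rw [Submodule.mem_span_singleton] at hw2
          obtain ⟨z, rfl⟩ := hw2
          have hdu : u = (decompose 𝒱 (w + z • v) δ : V) := by
            rw [hsum, DirectSum.decompose_of_mem_same 𝒱 huδ]
          rw [hdu, aux_dec_add 𝒱 w (z • v) δ]
          refine add_mem (hGr w hw δ) ?_
          rw [aux_proj_smul 𝒜 𝒱 hsmul hv z δ]
          have ht : (decompose 𝒜 z (δ - δ₀) : R) ∈ J := hno _ (SetLike.coe_mem _)
          rw [hmemJ] at ht
          exact ht
      · rintro (⟨u, huδ, huW'⟩ | ⟨δ', ⟨z, hzδ', hzJ⟩, rfl⟩)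
        · exact ⟨u, huδ, fun h => huW' (Submodule.mem_sup_left h)⟩
        · refine ⟨z • v, ?_, fun h => hzJ ((hmemJ z).mpr h)⟩
          have h2 := hsmul δ' δ₀ z v hzδ' hv
          rwa [add_comm] at h2
    rw [hT2]
    exact GoodSet_union dg (IH W' hWW' hGrW')
      (GoodSet_translate dg δ₀ (aux_keyI 𝒜 g dg hg hgen J hGrJ))

end keyV

/-- Let `R` be a Noetherian `ℤ^d`-graded ring, finitely
generated over its degree-0 piece by homogeneous elements `g j` of degrees
`dg j`, and let `V` be a finitely generated graded `R`-module.  Then the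
quasidegree set `qdeg(V)` — the Zariski closure in `ℂ^d` of
`tdeg(V) = {β ∈ ℤ^d : V_β ≠ 0}` — is a finite union of affine subspaces of
`ℂ^d`, each a translate of the complex span of the degrees of some subset of
the generators of `R`. -/
theorem quasidegrees_are_affine_subspace_arrangement
    (d r : ℕ) {R V : Type} [CommRing R] [IsNoetherianRing R]
    (𝒜 : (Fin d → ℤ) → AddSubgroup R) [GradedRing 𝒜]
    (g : Fin r → R) (dg : Fin r → Fin d → ℤ)
    (hg : ∀ j, g j ∈ 𝒜 (dg j))
    (hgen : Subring.closure ((𝒜 0 : Set R) ∪ Set.range g) = ⊤)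
    [AddCommGroup V] [Module R V] [Module.Finite R V]
    (𝒱 : (Fin d → ℤ) → AddSubgroup V) [DirectSum.Decomposition 𝒱]
    (hsmul : ∀ (α β : Fin d → ℤ) (x : R) (v : V),
      x ∈ 𝒜 α → v ∈ 𝒱 β → x • v ∈ 𝒱 (α + β)) :
    ∃ t : Finset ((Fin d → ℂ) × Finset (Fin r)),
      -- the Zariski closure in ℂ^d of the set of true degrees of V ...
      {x : Fin d → ℂ | ∀ p : MvPolynomial (Fin d) ℂ,
          (∀ β : Fin d → ℤ, 𝒱 β ≠ ⊥ →
            MvPolynomial.eval (fun i => (β i : ℂ)) p = 0) →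
          MvPolynomial.eval x p = 0}
      -- ... is a finite union of translated spans of subsets of the dg j's
      = ⋃ s ∈ t, {x : Fin d → ℂ | ∃ c : Fin r → ℂ,
          x = s.1 + ∑ j ∈ s.2, c j • (fun i => (dg j i : ℂ))} := by
  classical
  have hGrbot : ∀ v ∈ (⊥ : Submodule R V), ∀ δ, (decompose 𝒱 v δ : V) ∈ (⊥ : Submodule R V) := by
    intro v hv δ
    rw [Submodule.mem_bot] at hv ⊢
    rw [hv, DirectSum.decompose_zero]
    simp
  have hGood := aux_keyV 𝒜 g dg hg hgen 𝒱 hsmul ⊥ hGrbot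
  have hTdeg : {δ : Fin d → ℤ | ∃ v ∈ 𝒱 δ, v ∉ (⊥ : Submodule R V)}
      = {β : Fin d → ℤ | 𝒱 β ≠ ⊥} := by
    ext δ
    simp only [Set.mem_setOf_eq, Submodule.mem_bot]
    constructor
    · rintro ⟨v, hv, hv0⟩ h
      rw [h] at hv
      exact hv0 (by simpa using hv)
    · intro h
      by_contra hno
      push_neg at hno
      apply h
      ext u
      simp only [AddSubgroup.mem_bot]
      exact ⟨fun hu => hno u hu, fun hu => hu ▸ (𝒱 δ).zero_mem⟩
  rw [hTdeg] at hGood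
  obtain ⟨L, hL⟩ := hGood
  have hLHS : {x : Fin d → ℂ | ∀ p : MvPolynomial (Fin d) ℂ,
      (∀ β : Fin d → ℤ, 𝒱 β ≠ ⊥ → MvPolynomial.eval (fun i => (β i : ℂ)) p = 0) →
      MvPolynomial.eval x p = 0}
      = zcl d ((fun (δ : Fin d → ℤ) => (fun i => (δ i : ℂ))) '' {β : Fin d → ℤ | 𝒱 β ≠ ⊥}) := by
    ext x
    simp only [zcl, Set.mem_setOf_eq]
    constructor
    · intro hx p hp
      exact hx p (fun β hβ => hp _ ⟨β, hβ, rfl⟩)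
    · intro hx p hp
      refine hx p ?_
      rintro - ⟨β, hβ, rfl⟩
      exact hp β hβ
  rw [hLHS, hL]
  rw [Set.image_iUnion₂]
  have hzcl : ∀ (L' : List ((Fin d → ℤ) × Finset (Fin r))),
      zcl d (⋃ q ∈ L', (fun (δ : Fin d → ℤ) => (fun i => (δ i : ℂ))) ''
          {δ : Fin d → ℤ | ∃ c : Fin r → ℕ, δ = q.1 + ∑ j ∈ q.2, (c j : ℤ) • dg j})
      = ⋃ q ∈ L', zcl d ((fun (δ : Fin d → ℤ) => (fun i => (δ i : ℂ))) ''
          {δ : Fin d → ℤ | ∃ c : Fin r → ℕ, δ = q.1 + ∑ j ∈ q.2, (c j : ℤ) • dg j}) := by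
    intro L'
    induction L' with
    | nil => simpa using zcl_empty d
    | cons q L' ih =>
      have hsplit : ∀ (f : ((Fin d → ℤ) × Finset (Fin r)) → Set (Fin d → ℂ)),
          (⋃ q' ∈ (q :: L'), f q') = f q ∪ ⋃ q' ∈ L', f q' := by
        intro f
        ext y
        simp only [Set.mem_iUnion, Set.mem_union, List.mem_cons, exists_prop]
        constructor
        · rintro ⟨q', hq' | hq', hy⟩
          · exact Or.inl (hq' ▸ hy)
          · exact Or.inr ⟨q', hq', hy⟩
        · rintro (hy | ⟨q', hq', hy⟩)
          · exact ⟨q, Or.inl rfl, hy⟩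
          · exact ⟨q', Or.inr hq', hy⟩
      rw [hsplit, zcl_union, ih, hsplit]
  rw [hzcl L]
  refine ⟨(L.map (fun q => ((fun i => ((q.1 i : ℂ))), q.2))).toFinset, ?_⟩
  ext x
  simp only [Set.mem_iUnion, exists_prop, List.mem_toFinset, List.mem_map]
  constructor
  · rintro ⟨q, hq, hx⟩
    rw [zcl_piece d r dg q.1 q.2] at hx
    exact ⟨((fun i => ((q.1 i : ℂ))), q.2), ⟨q, hq, rfl⟩, hx⟩
  · rintro ⟨s', ⟨q, hq, rfl⟩, hx⟩
    refine ⟨q, hq, ?_⟩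
    rw [zcl_piece d r dg q.1 q.2]
    exact hx
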